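/- For every p with 1 < p ≤ 2 there exists a constant C(p) > 0 such that for all real numbers a, b₁, b₂ with 0 ≤ a ≤ 1 one has | |a + b₁|^p − |a + b₂|^p − p a^{p−1}(b₁ − b₂) | ≤ C(p)(|b₁|^{p−1} + |b₂|^{p−1}) |b₁ − b₂|; and for every p > 2 there exists C(p) > 0 such that for all real a, b₁, b₂ with 0 ≤ a ≤ 1 one has | |a + b₁|^p − |a + b₂|^p − p a^{p−1}(b₁ − b₂) | ≤ C(p)(|b₁| + |b₂| + |b₁|^{p−1} + |b₂|^{p−1}) |b₁ − b₂|. -/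

import Mathlib

open Real Set

noncomputable def phi (q : ℝ) (x : ℝ) : ℝ := Real.sign x * |x| ^ q

lemma phi_nonneg {q : ℝ} (hq : q ≠ 0) {x : ℝ} (hx : 0 ≤ x) : phi q x = x ^ q := by
  rcases eq_or_lt_of_le hx with h | h
  · simp [phi, ← h, Real.sign_zero, Real.zero_rpow hq]
  · rw [phi, Real.sign_of_pos h, abs_of_pos h, one_mul]

lemma abs_phi (q : ℝ) (x : ℝ) : |phi q x| ≤ |x| ^ q := by
  rcases lt_trichotomy x 0 with h | h | h
  · rw [phi, Real.sign_of_neg h]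
    simp [abs_of_nonneg (Real.rpow_nonneg (abs_nonneg x) q)]
  · simp [phi, h, Real.sign_zero]
    positivity
  · rw [phi, Real.sign_of_pos h, one_mul,
      abs_of_nonneg (Real.rpow_nonneg (abs_nonneg x) q)]

lemma hasDerivAt_phi {q : ℝ} (hq : 1 < q) (x : ℝ) :
    HasDerivAt (phi q) (q * |x| ^ (q - 1)) x := by
  rcases lt_trichotomy x 0 with h | h | h
  · have hd : HasDerivAt (fun y : ℝ => -((-y) ^ q)) (q * (-x) ^ (q - 1)) x := by
      have h1 : HasDerivAt (fun y : ℝ => (-y) ^ q) (q * (-x) ^ (q - 1) * (-1)) x :=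
        (Real.hasDerivAt_rpow_const (x := -x) (Or.inl (by linarith))).comp x (hasDerivAt_neg x)
      have := h1.neg
      exact this.congr_deriv (by ring)
    have heq : phi q =ᶠ[nhds x] fun y => -((-y) ^ q) := by
      filter_upwards [eventually_lt_nhds h] with y hy
      rw [phi, Real.sign_of_neg hy, abs_of_neg hy]; ring
    have := hd.congr_of_eventuallyEq heq
    rwa [abs_of_neg h]
  · subst h
    rw [hasDerivAt_iff_tendsto]
    have key : (fun x' : ℝ => ‖x' - 0‖⁻¹ * ‖phi q x' - phi q 0 - (x' - 0) • (q * |(0:ℝ)| ^ (q-1))‖)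
        = fun x' : ℝ => |phi q x'| / |x'| := by
      funext y
      simp [phi, Real.sign_zero, Real.zero_rpow (show q - 1 ≠ 0 by linarith), div_eq_inv_mul,
        abs_mul]
    rw [key]
    have hle : ∀ y : ℝ, |phi q y| / |y| ≤ |y| ^ (q - 1) := by
      intro y
      rcases eq_or_ne y 0 with rfl | hy
      · simp [Real.zero_rpow (show q - 1 ≠ 0 by linarith)]
      · rw [div_le_iff₀ (abs_pos.2 hy)]
        calc |phi q y| ≤ |y| ^ q := abs_phi q y
          _ = |y| ^ (q - 1) * |y| := by
              rw [← Real.rpow_add_one (abs_ne_zero.2 hy)]; ring_nf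
    have h0 : ∀ y : ℝ, 0 ≤ |phi q y| / |y| := fun y => by positivity
    have hcont : Filter.Tendsto (fun y : ℝ => |y| ^ (q - 1)) (nhds 0) (nhds 0) := by
      have := (continuous_abs.rpow_const
        (fun _ => Or.inr (by linarith : (0:ℝ) ≤ q - 1))).tendsto 0
      simpa [Real.zero_rpow (show q - 1 ≠ 0 by linarith)] using this
    exact squeeze_zero h0 hle hcont
  · have hd : HasDerivAt (fun y : ℝ => y ^ q) (q * x ^ (q - 1)) x :=
      Real.hasDerivAt_rpow_const (Or.inl (ne_of_gt h))
    have heq : phi q =ᶠ[nhds x] fun y => y ^ q := by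
      filter_upwards [eventually_gt_nhds h] with y hy
      rw [phi, Real.sign_of_pos hy, abs_of_pos hy, one_mul]
    have := hd.congr_of_eventuallyEq heq
    rwa [abs_of_pos h]

lemma hasDerivAt_abs_rpow' {p : ℝ} (hp : 1 < p) (x : ℝ) :
    HasDerivAt (fun y : ℝ => |y| ^ p) (p * phi (p - 1) x) x := by
  have := hasDerivAt_abs_rpow x hp
  convert this using 1
  rcases eq_or_ne x 0 with rfl | hx
  · simp [phi, Real.sign_zero]
  · rw [phi, show p - 1 = (p - 2) + 1 by ring, Real.rpow_add_one (abs_ne_zero.2 hx)]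
    rcases lt_or_gt_of_ne hx with h | h
    · rw [Real.sign_of_neg h, abs_of_neg h]; ring
    · rw [Real.sign_of_pos h, abs_of_pos h]; ring

lemma rpow_sub_le {q u v : ℝ} (hq0 : 0 ≤ q) (hq1 : q ≤ 1) (hv : 0 ≤ v) (hvu : v ≤ u) :
    u ^ q - v ^ q ≤ (u - v) ^ q := by
  have h := NNReal.rpow_add_le_add_rpow (Real.toNNReal (u - v)) (Real.toNNReal v) hq0 hq1
  have h' := (NNReal.coe_le_coe.2 h)
  push_cast at h'
  rw [Real.coe_toNNReal _ (by linarith), Real.coe_toNNReal _ hv,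
    show u - v + v = u by ring] at h'
  linarith

lemma holder_phi {q : ℝ} (hq0 : 0 < q) (hq1 : q ≤ 1) {a : ℝ} (ha : 0 ≤ a) (x : ℝ) :
    |phi q (a + x) - a ^ q| ≤ 2 * |x| ^ q := by
  rcases le_or_gt 0 (a + x) with h | h
  · rw [phi_nonneg (ne_of_gt hq0) h]
    have hx : (0:ℝ) ≤ |x| ^ q := Real.rpow_nonneg (abs_nonneg x) q
    have h1 : (a + x) ^ q - a ^ q ≤ |x| ^ q := by
      rcases le_or_gt x 0 with hx0 | hx0
      · have : (a + x) ^ q ≤ a ^ q :=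
          Real.rpow_le_rpow h (by linarith) hq0.le
        linarith
      · have := rpow_sub_le hq0.le hq1 ha (show a ≤ a + x by linarith)
        rw [show a + x - a = x by ring] at this
        rw [abs_of_pos hx0]
        linarith [this]
    have h2 : a ^ q - (a + x) ^ q ≤ |x| ^ q := by
      rcases le_or_gt x 0 with hx0 | hx0
      · have := rpow_sub_le hq0.le hq1 h (show a + x ≤ a by linarith)
        rw [show a - (a + x) = -x by ring] at this
        rw [abs_of_nonpos hx0]
        linarith
      · have : a ^ q ≤ (a + x) ^ q :=
          Real.rpow_le_rpow ha (by linarith) hq0.le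
        linarith
    rw [abs_sub_le_iff]
    constructor <;> linarith
  · have hx : x < 0 := by linarith
    have hxa : a ≤ -x := by linarith
    have hax : -(a + x) ≤ -x := by linarith
    rw [phi, Real.sign_of_neg h, abs_of_neg h]
    have e1 : (-(a+x)) ^ q ≤ |x| ^ q := by
      rw [abs_of_neg hx]
      exact Real.rpow_le_rpow (by linarith) hax hq0.le
    have e2 : a ^ q ≤ |x| ^ q := by
      rw [abs_of_neg hx]
      exact Real.rpow_le_rpow ha hxa hq0.le
    have e3 : (0:ℝ) ≤ (-(a+x)) ^ q := Real.rpow_nonneg (by linarith) q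
    have e4 : (0:ℝ) ≤ a ^ q := Real.rpow_nonneg ha q
    rw [show -1 * (-(a+x)) ^ q - a ^ q = -((-(a+x)) ^ q + a ^ q) by ring, abs_neg,
      abs_of_nonneg (by linarith)]
    linarith

lemma phi_diff_le {q : ℝ} (hq : 1 < q) {a : ℝ} (ha0 : 0 ≤ a) (ha1 : a ≤ 1) (x : ℝ) :
    |phi q (a + x) - a ^ q| ≤ q * 2 ^ (q - 1) * (|x| + |x| ^ q) := by
  rcases eq_or_ne x 0 with rfl | hx0
  · simp [phi_nonneg (show q ≠ 0 by linarith) ha0]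
    positivity
  set C : ℝ := q * (1 + |x|) ^ (q - 1) with hC
  have hmvt : |phi q (a + x) - phi q a| ≤ C * |x| := by
    have key := Convex.norm_image_sub_le_of_norm_hasDerivWithin_le
      (f := phi q) (f' := fun ξ => q * |ξ| ^ (q - 1)) (s := Set.uIcc a (a + x))
      (fun ξ _ => (hasDerivAt_phi hq ξ).hasDerivWithinAt)
      (fun ξ hξ => by
        have hξabs : |ξ| ≤ 1 + |x| := by
          rcases Set.mem_uIcc.1 hξ with ⟨h1, h2⟩ | ⟨h1, h2⟩
          · have := abs_le_max_abs_abs h1 h2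
            have h3 : |a| ≤ 1 + |x| := by
              rw [abs_of_nonneg ha0]; have := abs_nonneg x; linarith
            have h4 : |a + x| ≤ 1 + |x| := by
              calc |a + x| ≤ |a| + |x| := abs_add_le a x
                _ ≤ 1 + |x| := by rw [abs_of_nonneg ha0]; linarith
            exact this.trans (max_le h3 h4)
          · have := abs_le_max_abs_abs h1 h2
            have h3 : |a| ≤ 1 + |x| := by
              rw [abs_of_nonneg ha0]; have := abs_nonneg x; linarith
            have h4 : |a + x| ≤ 1 + |x| := by
              calc |a + x| ≤ |a| + |x| := abs_add_le a x
                _ ≤ 1 + |x| := by rw [abs_of_nonneg ha0]; linarith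
            exact this.trans (max_le h4 h3)
        show ‖q * |ξ| ^ (q - 1)‖ ≤ C
        rw [Real.norm_eq_abs, abs_of_nonneg (by positivity)]
        have : |ξ| ^ (q - 1) ≤ (1 + |x|) ^ (q - 1) :=
          Real.rpow_le_rpow (abs_nonneg ξ) hξabs (by linarith)
        rw [hC]
        have hq0 : (0:ℝ) < q := by linarith
        nlinarith [Real.rpow_nonneg (abs_nonneg ξ) (q-1)])
      (convex_uIcc a (a + x)) (Set.left_mem_uIcc) (Set.right_mem_uIcc)
    simpa [Real.norm_eq_abs] using key
  rw [phi_nonneg (show q ≠ 0 by linarith) ha0] at hmvt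
  refine hmvt.trans ?_
  have hpow : (1 + |x|) ^ (q - 1) ≤ 2 ^ (q - 1) * (1 + |x| ^ (q - 1)) := by
    have hmax : 1 + |x| ≤ 2 * max 1 |x| := by
      rcases le_total |x| 1 with h | h
      · rw [max_eq_left h]; linarith
      · rw [max_eq_right h]; linarith
    calc (1 + |x|) ^ (q - 1) ≤ (2 * max 1 |x|) ^ (q - 1) :=
          Real.rpow_le_rpow (by positivity) hmax (by linarith)
      _ = 2 ^ (q - 1) * (max 1 |x|) ^ (q - 1) :=
          Real.mul_rpow (by norm_num) (le_max_of_le_left zero_le_one)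
      _ ≤ 2 ^ (q - 1) * (1 + |x| ^ (q - 1)) := by
          gcongr
          rcases le_total |x| 1 with h | h
          · rw [max_eq_left h, Real.one_rpow]
            have : (0:ℝ) ≤ |x| ^ (q-1) := Real.rpow_nonneg (abs_nonneg x) _
            linarith
          · rw [max_eq_right h]
            linarith
  have hsplit : |x| ^ (q - 1) * |x| = |x| ^ q := by
    rw [← Real.rpow_add_one (abs_ne_zero.2 hx0)]; ring_nf
  have hxpos : (0:ℝ) < |x| := abs_pos.2 hx0
  calc C * |x| = q * ((1 + |x|) ^ (q - 1) * |x|) := by rw [hC]; ring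
    _ ≤ q * (2 ^ (q - 1) * (1 + |x| ^ (q - 1)) * |x|) := by
        have hq0 : (0:ℝ) < q := by linarith
        gcongr
    _ = q * 2 ^ (q - 1) * (|x| + |x| ^ (q - 1) * |x|) := by ring
    _ = q * 2 ^ (q - 1) * (|x| + |x| ^ q) := by rw [hsplit]

lemma abs_mem_uIcc_le {x b₁ b₂ : ℝ} (hx : x ∈ Set.uIcc b₂ b₁) : |x| ≤ max |b₁| |b₂| := by
  rcases Set.mem_uIcc.1 hx with ⟨h1, h2⟩ | ⟨h1, h2⟩
  · exact (abs_le_max_abs_abs h1 h2).trans (by rw [max_comm])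
  · exact abs_le_max_abs_abs h1 h2

lemma max_rpow_le {x y q : ℝ} (hq : 0 ≤ q) :
    (max |x| |y|) ^ q ≤ |x| ^ q + |y| ^ q := by
  rcases le_total |x| |y| with h | h
  · rw [max_eq_right h]
    have : (0:ℝ) ≤ |x| ^ q := Real.rpow_nonneg (abs_nonneg x) q
    linarith
  · rw [max_eq_left h]
    have : (0:ℝ) ≤ |y| ^ q := Real.rpow_nonneg (abs_nonneg y) q
    linarith

lemma mvt_main {p : ℝ} (hp : 1 < p) (a b₁ b₂ : ℝ) {K : ℝ}
    (hK : ∀ x ∈ Set.uIcc b₂ b₁, p * |phi (p - 1) (a + x) - a ^ (p - 1)| ≤ K) :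
    |(|a + b₁| ^ p - |a + b₂| ^ p - p * a ^ (p - 1) * (b₁ - b₂))| ≤ K * |b₁ - b₂| := by
  set G : ℝ → ℝ := fun x => |a + x| ^ p - p * a ^ (p - 1) * x with hG
  have hd : ∀ x : ℝ, HasDerivAt G (p * phi (p - 1) (a + x) - p * a ^ (p - 1)) x := by
    intro x
    have h1 : HasDerivAt (fun x : ℝ => |a + x| ^ p) (p * phi (p - 1) (a + x) * 1) x :=
      (hasDerivAt_abs_rpow' hp (a + x)).comp x ((hasDerivAt_id x).const_add a)
    have h2 : HasDerivAt (fun x : ℝ => p * a ^ (p - 1) * x) (p * a ^ (p - 1)) x := by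
      simpa using (hasDerivAt_id x).const_mul (p * a ^ (p - 1))
    exact (h1.sub h2).congr_deriv (by ring)
  have key := Convex.norm_image_sub_le_of_norm_hasDerivWithin_le
    (f := G) (f' := fun x => p * phi (p - 1) (a + x) - p * a ^ (p - 1))
    (s := Set.uIcc b₂ b₁)
    (fun x _ => (hd x).hasDerivWithinAt)
    (fun x hx => by
      show ‖p * phi (p - 1) (a + x) - p * a ^ (p - 1)‖ ≤ K
      rw [Real.norm_eq_abs, show p * phi (p - 1) (a + x) - p * a ^ (p - 1)
        = p * (phi (p - 1) (a + x) - a ^ (p - 1)) by ring, abs_mul,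
        abs_of_pos (by linarith : (0:ℝ) < p)]
      exact hK x hx)
    (convex_uIcc b₂ b₁) (Set.left_mem_uIcc) (Set.right_mem_uIcc)
  have : G b₁ - G b₂ = |a + b₁| ^ p - |a + b₂| ^ p - p * a ^ (p - 1) * (b₁ - b₂) := by
    rw [hG]; ring
  rw [this] at key
  simpa [Real.norm_eq_abs] using key




/-- Elementary power inequalities: for `1 < p ≤ 2` there is `C(p) > 0` with
`| |a+b₁|^p − |a+b₂|^p − p a^{p−1}(b₁−b₂) | ≤ C(p)(|b₁|^{p−1}+|b₂|^{p−1})|b₁−b₂|`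
for all `0 ≤ a ≤ 1`, `b₁, b₂ ∈ ℝ`; and for `p > 2` there is `C(p) > 0` with
`| |a+b₁|^p − |a+b₂|^p − p a^{p−1}(b₁−b₂) | ≤ C(p)(|b₁|+|b₂|+|b₁|^{p−1}+|b₂|^{p−1})|b₁−b₂|`. -/
theorem stmt_18 :
    (∀ p : ℝ, 1 < p → p ≤ 2 → ∃ C : ℝ, 0 < C ∧ ∀ a b₁ b₂ : ℝ, 0 ≤ a → a ≤ 1 →
      |(|a + b₁| ^ p - |a + b₂| ^ p - p * a ^ (p - 1) * (b₁ - b₂))| ≤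
        C * (|b₁| ^ (p - 1) + |b₂| ^ (p - 1)) * |b₁ - b₂|) ∧
    (∀ p : ℝ, 2 < p → ∃ C : ℝ, 0 < C ∧ ∀ a b₁ b₂ : ℝ, 0 ≤ a → a ≤ 1 →
      |(|a + b₁| ^ p - |a + b₂| ^ p - p * a ^ (p - 1) * (b₁ - b₂))| ≤
        C * (|b₁| + |b₂| + |b₁| ^ (p - 1) + |b₂| ^ (p - 1)) * |b₁ - b₂|) := by
  constructor
  · intro p hp hp2
    refine ⟨2 * p, by linarith, fun a b₁ b₂ ha0 ha1 => ?_⟩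
    have key := mvt_main hp a b₁ b₂ (K := 2 * p * (|b₁| ^ (p - 1) + |b₂| ^ (p - 1)))
      (fun x hx => by
        have h1 := holder_phi (show (0:ℝ) < p - 1 by linarith)
          (show p - 1 ≤ 1 by linarith) ha0 x
        have h2 : |x| ^ (p - 1) ≤ |b₁| ^ (p - 1) + |b₂| ^ (p - 1) := by
          calc |x| ^ (p - 1) ≤ (max |b₁| |b₂|) ^ (p - 1) :=
                Real.rpow_le_rpow (abs_nonneg x) (abs_mem_uIcc_le hx) (by linarith)
            _ ≤ |b₁| ^ (p - 1) + |b₂| ^ (p - 1) := max_rpow_le (by linarith)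
        nlinarith [abs_nonneg (phi (p - 1) (a + x) - a ^ (p - 1))])
    calc _ ≤ 2 * p * (|b₁| ^ (p - 1) + |b₂| ^ (p - 1)) * |b₁ - b₂| := key
      _ = 2 * p * (|b₁| ^ (p - 1) + |b₂| ^ (p - 1)) * |b₁ - b₂| := rfl
  · intro p hp
    have hp1 : (1:ℝ) < p := by linarith
    refine ⟨p * ((p - 1) * 2 ^ (p - 2)), mul_pos (by linarith) (mul_pos (by linarith) (Real.rpow_pos_of_pos (by norm_num) (p - 2))), fun a b₁ b₂ ha0 ha1 => ?_⟩
    have key := mvt_main hp1 a b₁ b₂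
      (K := p * ((p - 1) * 2 ^ (p - 2)) * (|b₁| + |b₂| + |b₁| ^ (p - 1) + |b₂| ^ (p - 1)))
      (fun x hx => by
        have h1 := phi_diff_le (show (1:ℝ) < p - 1 by linarith) ha0 ha1 x
        rw [show p - 1 - 1 = p - 2 by ring] at h1
        have hxle : |x| ≤ |b₁| + |b₂| := by
          refine (abs_mem_uIcc_le hx).trans ?_
          rcases le_total |b₁| |b₂| with h | h
          · rw [max_eq_right h]; have := abs_nonneg b₁; linarith
          · rw [max_eq_left h]; have := abs_nonneg b₂; linarith
        have h2 : |x| ^ (p - 1) ≤ |b₁| ^ (p - 1) + |b₂| ^ (p - 1) := by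
          calc |x| ^ (p - 1) ≤ (max |b₁| |b₂|) ^ (p - 1) :=
                Real.rpow_le_rpow (abs_nonneg x) (abs_mem_uIcc_le hx) (by linarith)
            _ ≤ |b₁| ^ (p - 1) + |b₂| ^ (p - 1) := max_rpow_le (by linarith)
        have h3 : |x| + |x| ^ (p - 1)
            ≤ |b₁| + |b₂| + |b₁| ^ (p - 1) + |b₂| ^ (p - 1) := by linarith
        have hc : (0:ℝ) < (p - 1) * 2 ^ (p - 2) := mul_pos (by linarith) (Real.rpow_pos_of_pos (by norm_num) (p - 2))
        calc p * |phi (p - 1) (a + x) - a ^ (p - 1)|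
            ≤ p * ((p - 1) * 2 ^ (p - 2) * (|x| + |x| ^ (p - 1))) := by
              have : (0:ℝ) < p := by linarith
              gcongr
          _ ≤ p * ((p - 1) * 2 ^ (p - 2)
              * (|b₁| + |b₂| + |b₁| ^ (p - 1) + |b₂| ^ (p - 1))) := by
              have : (0:ℝ) < p := by linarith
              gcongr
          _ = p * ((p - 1) * 2 ^ (p - 2))
              * (|b₁| + |b₂| + |b₁| ^ (p - 1) + |b₂| ^ (p - 1)) := by ring)
    exact key
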